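/- The set of fusible numbers is topologically closed in ℝ: if (z_n) is a strictly increasing sequence of fusible numbers converging to z ∈ ℝ, then z is fusible. -/

import Mathlib

/-- The set of fusible numbers. -/
inductive Fusible : ℝ → Prop
  | zero : Fusible 0
  | fuse (x y : ℝ) : Fusible x → Fusible y → |y - x| < 1 → Fusible ((x + y + 1) / 2)

inductive FusibleT : ℝ → Type
  | zero : FusibleT 0
  | fuse (x y : ℝ) : FusibleT x → FusibleT y → |y - x| < 1 → FusibleT ((x + y + 1) / 2)

def FusibleT.depth : ∀ {x : ℝ}, FusibleT x → ℕ
  | _, .zero => 0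
  | _, .fuse _ _ tx ty _ => max tx.depth ty.depth + 1

lemma FusibleT.toFusible : ∀ {x : ℝ}, FusibleT x → Fusible x
  | _, .zero => Fusible.zero
  | _, .fuse x y tx ty h => Fusible.fuse x y tx.toFusible ty.toFusible h

lemma nonempty_fusibleT {x : ℝ} (h : Fusible x) : Nonempty (FusibleT x) := by
  induction h with
  | zero => exact ⟨.zero⟩
  | fuse x y hx hy h ihx ihy => exact ⟨.fuse x y ihx.some ihy.some h⟩

noncomputable def fdepth (x : ℝ) : ℕ := sInf {n | ∃ t : FusibleT x, t.depth = n}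

lemma fusible_nonneg {x : ℝ} (h : Fusible x) : 0 ≤ x := by
  induction h with
  | zero => exact le_refl _
  | fuse x y hx hy h ihx ihy => linarith

lemma exists_decomp {z : ℝ} (h : Fusible z) (hz : z ≠ 0) :
    ∃ a b : ℝ, Fusible a ∧ Fusible b ∧ a ≤ b ∧ b - a < 1 ∧ z = (a + b + 1) / 2 ∧
      fdepth a < fdepth z ∧ fdepth b < fdepth z := by
  have hne : {n | ∃ t : FusibleT z, t.depth = n}.Nonempty :=
    ⟨(nonempty_fusibleT h).some.depth, (nonempty_fusibleT h).some, rfl⟩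
  obtain ⟨t, ht⟩ := Nat.sInf_mem hne
  cases t with
  | zero => exact absurd rfl hz
  | fuse x y tx ty hxy =>
    have hdx : fdepth x ≤ tx.depth := Nat.sInf_le ⟨tx, rfl⟩
    have hdy : fdepth y ≤ ty.depth := Nat.sInf_le ⟨ty, rfl⟩
    have hd : max tx.depth ty.depth + 1 = fdepth ((x + y + 1) / 2) := ht
    have hmx : tx.depth ≤ max tx.depth ty.depth := le_max_left _ _
    have hmy : ty.depth ≤ max tx.depth ty.depth := le_max_right _ _
    have hdx' : fdepth x < fdepth ((x + y + 1) / 2) := by omega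
    have hdy' : fdepth y < fdepth ((x + y + 1) / 2) := by omega
    obtain ⟨h1, h2⟩ := abs_lt.mp hxy
    rcases le_total x y with hle | hle
    · exact ⟨x, y, tx.toFusible, ty.toFusible, hle, by linarith, rfl, hdx', hdy'⟩
    · exact ⟨y, x, ty.toFusible, tx.toFusible, hle, by linarith, by ring, hdy', hdx'⟩

lemma mono_or_anti (f : ℕ → ℝ) :
    (∃ φ : ℕ → ℕ, StrictMono φ ∧ StrictAnti (f ∘ φ)) ∨
    (∃ φ : ℕ → ℕ, StrictMono φ ∧ Monotone (f ∘ φ)) := by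
  classical
  by_cases hP : {n | ∀ m, n < m → f n ≤ f m}.Infinite
  · right
    refine ⟨Nat.nth (fun n => ∀ m, n < m → f n ≤ f m), Nat.nth_strictMono hP, ?_⟩
    refine monotone_nat_of_le_succ fun k => ?_
    have h1 := Nat.nth_mem_of_infinite (p := fun n => ∀ m, n < m → f n ≤ f m) hP k
    exact h1 _ (Nat.nth_strictMono hP (Nat.lt_succ_self k))
  · left
    have hfin := Set.not_infinite.mp hP
    obtain ⟨N0, hN0⟩ := hfin.bddAbove
    have key : ∀ n, N0 < n → ∃ m, n < m ∧ f m < f n := by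
      intro n hn
      have hnot : n ∉ {n | ∀ m, n < m → f n ≤ f m} := fun hmem => absurd (hN0 hmem) (not_le.mpr hn)
      simp only [Set.mem_setOf_eq, not_forall, not_le] at hnot
      obtain ⟨m, hm1, hm2⟩ := hnot
      exact ⟨m, hm1, hm2⟩
    let g : ℕ → ℕ := fun n => if h : N0 < n then (key n h).choose else N0 + 1
    have hg : ∀ n, N0 < n → n < g n ∧ f (g n) < f n := by
      intro n h
      simp only [g, dif_pos h]
      exact ⟨(key n h).choose_spec.1, (key n h).choose_spec.2⟩
    let φ : ℕ → ℕ := fun k => g^[k] (N0 + 1)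
    have hφpos : ∀ k, N0 < φ k := by
      intro k
      induction k with
      | zero => exact Nat.lt_succ_self N0
      | succ k ih =>
        have : φ (k + 1) = g (φ k) := Function.iterate_succ_apply' g k (N0 + 1)
        rw [this]
        exact lt_trans ih (hg (φ k) ih).1
    have hstep : ∀ k, φ (k + 1) = g (φ k) := fun k => Function.iterate_succ_apply' g k (N0 + 1)
    refine ⟨φ, strictMono_nat_of_lt_succ fun k => ?_, strictAnti_nat_of_succ_lt fun k => ?_⟩
    · rw [hstep]; exact (hg (φ k) (hφpos k)).1
    · show f (φ (k + 1)) < f (φ k)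
      rw [hstep]; exact (hg (φ k) (hφpos k)).2
def Bad (f : ℕ → ℝ) : Prop := (∀ n, Fusible (f n)) ∧ StrictAnti f

lemma no_bad : ¬ ∃ f : ℕ → ℝ, Bad f := by
  classical
  rintro ⟨f0, hf0⟩
  -- the set of bad sequences agreeing with g on positions < n
  let A : ℕ → (ℕ → ℝ) → Set (ℕ → ℝ) := fun n g => {h | Bad h ∧ ∀ i, i < n → h i = g i}
  have hgA : ∀ n (g : ℕ → ℝ), Bad g → g ∈ A n g := fun n g hg => ⟨hg, fun i _ => rfl⟩
  have hpick : ∀ (n : ℕ) (g : ℕ → ℝ), Bad g →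
      ∃ h, h ∈ A n g ∧ ∀ h' ∈ A n g, fdepth (h n) ≤ fdepth (h' n) := by
    intro n g hg
    have hD : ((fun h : ℕ → ℝ => fdepth (h n)) '' A n g).Nonempty :=
      ⟨_, ⟨g, hgA n g hg, rfl⟩⟩
    obtain ⟨h, hh, hmin⟩ := Nat.sInf_mem hD
    refine ⟨h, hh, fun h' hh' => ?_⟩
    have h1 : fdepth (h n) = sInf ((fun h : ℕ → ℝ => fdepth (h n)) '' A n g) := hmin
    rw [h1]
    exact Nat.sInf_le ⟨h', hh', rfl⟩
  choose pick hmem hmin using hpick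
  have hbadpick : ∀ n g hg, Bad (pick n g hg) := fun n g hg => (hmem n g hg).1
  -- the minimal bad "sequence of sequences"
  let seq : ℕ → {g : ℕ → ℝ // Bad g} := fun n =>
    Nat.rec ⟨pick 0 f0 hf0, hbadpick 0 f0 hf0⟩
      (fun n prev => ⟨pick (n + 1) prev.1 prev.2, hbadpick (n + 1) prev.1 prev.2⟩) n
  have seq_succ : ∀ n, (seq (n + 1)).1 = pick (n + 1) (seq n).1 (seq n).2 := fun n => rfl
  have hag : ∀ n i, i ≤ n → (seq (n + 1)).1 i = (seq n).1 i := by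
    intro n i hi
    rw [seq_succ]
    exact (hmem (n + 1) (seq n).1 (seq n).2).2 i (Nat.lt_succ_of_le hi)
  have hag2 : ∀ n k i, i ≤ n → (seq (n + k)).1 i = (seq n).1 i := by
    intro n k
    induction k with
    | zero => intro i _; rfl
    | succ k ih =>
      intro i hi
      have h1 : n + (k + 1) = (n + k) + 1 := rfl
      rw [h1, hag (n + k) i (hi.trans (Nat.le_add_right n k)), ih i hi]
  let G : ℕ → ℝ := fun n => (seq n).1 n
  have hGseq : ∀ n i, i ≤ n → (seq n).1 i = G i := by
    intro n i hi
    have h1 : n = i + (n - i) := (Nat.add_sub_cancel' hi).symm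
    calc (seq n).1 i = (seq (i + (n - i))).1 i := by rw [← h1]
    _ = (seq i).1 i := hag2 i (n - i) i le_rfl
  have hGfus : ∀ n, Fusible (G n) := fun n => (seq n).2.1 n
  have hGanti : StrictAnti G := by
    refine strictAnti_nat_of_succ_lt fun n => ?_
    calc G (n + 1) = (seq (n + 1)).1 (n + 1) := rfl
    _ < (seq (n + 1)).1 n := (seq (n + 1)).2.2 (Nat.lt_succ_self n)
    _ = G n := hGseq (n + 1) n (Nat.le_succ n)
  have hGmin : ∀ n (h : ℕ → ℝ), Bad h → (∀ i, i < n → h i = G i) →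
      fdepth (G n) ≤ fdepth (h n) := by
    intro n h hb hpre
    cases n with
    | zero => exact hmin 0 f0 hf0 h ⟨hb, fun i hi => absurd hi (Nat.not_lt_zero i)⟩
    | succ m =>
      have hpre' : ∀ i, i < m + 1 → h i = (seq m).1 i := by
        intro i hi
        rw [hpre i hi, hGseq m i (Nat.lt_succ_iff.mp hi)]
      have := hmin (m + 1) (seq m).1 (seq m).2 h ⟨hb, hpre'⟩
      calc fdepth (G (m + 1)) = fdepth ((seq (m + 1)).1 (m + 1)) := rfl
      _ ≤ fdepth (h (m + 1)) := by rw [seq_succ] at *; exact this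
  -- decompose
  have hGpos : ∀ n, G n ≠ 0 := by
    intro n
    have h1 : G (n + 1) < G n := hGanti (Nat.lt_succ_self n)
    have h2 : 0 ≤ G (n + 1) := fusible_nonneg (hGfus (n + 1))
    exact ne_of_gt (lt_of_le_of_lt h2 h1)
  have hdec := fun n => exists_decomp (hGfus n) (hGpos n)
  choose a b ha hb hab hablt heq hda hdb using hdec
  have haltG : ∀ n, a n < G n := by intro n; have := hab n; have := heq n; linarith [heq n, hab n]
  have hbltG : ∀ n, b n < G n := by intro n; linarith [heq n, hablt n]
  -- no strictly decreasing subsequence of a component sequence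
  have NSD : ∀ c : ℕ → ℝ, (∀ n, Fusible (c n)) → (∀ n, c n < G n) →
      (∀ n, fdepth (c n) < fdepth (G n)) →
      ∀ φ : ℕ → ℕ, StrictMono φ → ¬ StrictAnti (c ∘ φ) := by
    intro c hcf hclt hcd φ hφ hanti
    set h : ℕ → ℝ := fun i => if i < φ 0 then G i else c (φ (i - φ 0)) with hdef
    have hval : ∀ i, φ 0 ≤ i → h i = c (φ (i - φ 0)) := by
      intro i hi; simp only [hdef, if_neg (not_lt.mpr hi)]
    have hval2 : ∀ i, i < φ 0 → h i = G i := by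
      intro i hi; simp only [hdef, if_pos hi]
    have hbad : Bad h := by
      constructor
      · intro i
        by_cases hi : i < φ 0
        · rw [hval2 i hi]; exact hGfus i
        · rw [hval i (not_lt.mp hi)]; exact hcf _
      · refine strictAnti_nat_of_succ_lt fun i => ?_
        by_cases h1 : i + 1 < φ 0
        · rw [hval2 _ h1, hval2 i (Nat.lt_of_succ_lt h1)]
          exact hGanti (Nat.lt_succ_self i)
        · by_cases h2 : i < φ 0
          · -- i + 1 = φ 0
            have h3 : i + 1 = φ 0 := le_antisymm (Nat.succ_le_of_lt h2) (not_lt.mp h1)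
            rw [hval (i + 1) (le_of_eq h3.symm), hval2 i h2, h3, Nat.sub_self]
            exact lt_trans (hclt (φ 0)) (hGanti h2)
          · have h2' : φ 0 ≤ i := not_lt.mp h2
            rw [hval (i + 1) (h2'.trans (Nat.le_succ i)), hval i h2']
            have h4 : i + 1 - φ 0 = (i - φ 0) + 1 := by omega
            rw [h4]
            exact hanti (Nat.lt_succ_self (i - φ 0))
    have hpre : ∀ i, i < φ 0 → h i = G i := hval2
    have hle := hGmin (φ 0) h hbad hpre
    rw [hval (φ 0) le_rfl, Nat.sub_self] at hle
    exact absurd (lt_of_le_of_lt hle (hcd (φ 0))) (lt_irrefl _)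
  have hdfa : ∀ n, fdepth (a n) < fdepth (G n) := hda
  -- extract monotone subsequences
  obtain ⟨φ1, hφ1, hmono1⟩ : ∃ φ : ℕ → ℕ, StrictMono φ ∧ Monotone (b ∘ φ) := by
    rcases mono_or_anti b with ⟨φ, hφ, hanti⟩ | hok
    · exact absurd hanti (NSD b hb hbltG hdb φ hφ)
    · exact hok
  obtain ⟨φ2, hφ2, hmono2⟩ : ∃ φ : ℕ → ℕ, StrictMono φ ∧ Monotone ((a ∘ φ1) ∘ φ) := by
    rcases mono_or_anti (a ∘ φ1) with ⟨φ, hφ, hanti⟩ | hok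
    · exact absurd hanti (NSD a ha haltG hdfa (φ1 ∘ φ) (hφ1.comp hφ))
    · exact hok
  have hχ : φ1 (φ2 0) < φ1 (φ2 1) := hφ1 (hφ2 Nat.zero_lt_one)
  have h1 : a (φ1 (φ2 0)) ≤ a (φ1 (φ2 1)) := hmono2 (Nat.zero_le 1)
  have h2 : b (φ1 (φ2 0)) ≤ b (φ1 (φ2 1)) := hmono1 ((hφ2.monotone (Nat.zero_le 1)))
  have h3 : G (φ1 (φ2 1)) < G (φ1 (φ2 0)) := hGanti hχ
  have e0 := heq (φ1 (φ2 0))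
  have e1 := heq (φ1 (φ2 1))
  linarith

theorem fusible_wo (f : ℕ → ℝ) (hf : ∀ n, Fusible (f n)) : ¬ StrictAnti f :=
  fun h => no_bad ⟨f, hf, h⟩
open Filter Topology

lemma closure_isWF : Set.IsWF (closure {x : ℝ | Fusible x}) := by
  classical
  rw [Set.isWF_iff_no_descending_seq]
  intro c hc hmem
  have hδ : ∀ n : ℕ, (0:ℝ) < (c n - c (n + 1)) / 2 := fun n => by
    have := hc (Nat.lt_succ_self n); linarith
  set δ : ℕ → ℝ := fun n => (c n - c (n + 1)) / 2 with hδdef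
  set ε : ℕ → ℝ := fun n => min (δ n) (δ (n - 1)) with hεdef
  have hε : ∀ n, 0 < ε n := fun n => lt_min (hδ n) (hδ (n - 1))
  have hF : ∀ n : ℕ, ∃ x, Fusible x ∧ dist (c n) x < ε n := by
    intro n
    obtain ⟨x, hx1, hx2⟩ := Metric.mem_closure_iff.mp (hmem n) (ε n) (hε n)
    exact ⟨x, hx1, hx2⟩
  choose f hf1 hf2 using hF
  refine fusible_wo f hf1 (strictAnti_nat_of_succ_lt fun n => ?_)
  have h1 : |c (n + 1) - f (n + 1)| < ε (n + 1) := by rw [← Real.dist_eq]; exact hf2 (n + 1)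
  have h2 : |c n - f n| < ε n := by rw [← Real.dist_eq]; exact hf2 n
  have h3 : ε (n + 1) ≤ δ n := by
    have : (n + 1) - 1 = n := rfl
    simp only [hεdef, this]
    exact min_le_right _ _
  have h4 : ε n ≤ δ n := min_le_left _ _
  have h5 := abs_lt.mp h1
  have h6 := abs_lt.mp h2
  simp only [hδdef] at h3 h4
  nlinarith [h5.1, h5.2, h6.1, h6.2]

lemma fusible_approx {z : ℝ} (hzc : z ∈ closure {x : ℝ | Fusible x}) (hznf : ¬ Fusible z) :
    ∀ w, w < z → ∃ x, Fusible x ∧ w < x ∧ x < z := by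
  classical
  intro w hw
  by_contra hcon
  push_neg at hcon
  -- every fusible > w is ≥ z, in fact > z
  have key : ∀ ε : ℝ, 0 < ε → ε ≤ z - w → ∃ x, Fusible x ∧ z < x ∧ x < z + ε := by
    intro ε hε hεw
    obtain ⟨x, hx1, hx2⟩ := Metric.mem_closure_iff.mp hzc ε hε
    rw [Real.dist_eq, abs_lt] at hx2
    have hx3 : w < x := by linarith
    have hx4 : z ≤ x := hcon x hx1 hx3
    have hx5 : z ≠ x := fun h => hznf (h ▸ hx1)
    exact ⟨x, hx1, lt_of_le_of_ne hx4 hx5, by linarith⟩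
  have hwz : 0 < z - w := by linarith
  have hstep : ∀ x : {x : ℝ // Fusible x ∧ z < x ∧ x < z + (z - w)},
      ∃ y : {x : ℝ // Fusible x ∧ z < x ∧ x < z + (z - w)}, y.1 < x.1 := by
    rintro ⟨x, hx1, hx2, hx3⟩
    obtain ⟨y, hy1, hy2, hy3⟩ := key (x - z) (by linarith) (by linarith)
    exact ⟨⟨y, hy1, hy2, by linarith⟩, by linarith⟩
  obtain ⟨x0, hx01, hx02, hx03⟩ := key (z - w) hwz le_rfl
  choose step hstep using hstep
  let v : ℕ → {x : ℝ // Fusible x ∧ z < x ∧ x < z + (z - w)} :=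
    fun n => step^[n] ⟨x0, hx01, hx02, hx03⟩
  refine fusible_wo (fun n => (v n).1) (fun n => (v n).2.1)
    (strictAnti_nat_of_succ_lt fun n => ?_)
  have h1 : v (n + 1) = step (v n) := Function.iterate_succ_apply' step n _
  rw [h1]
  exact hstep (v n)

lemma exists_inc_seq {z : ℝ} (hzc : z ∈ closure {x : ℝ | Fusible x}) (hznf : ¬ Fusible z) :
    ∃ u : ℕ → ℝ, (∀ n, Fusible (u n)) ∧ StrictMono u ∧ (∀ n, u n < z) ∧
      Tendsto u atTop (𝓝 z) := by
  classical
  have happ := fusible_approx hzc hznf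
  have hstep : ∀ (n : ℕ) (c : {x : ℝ // Fusible x ∧ x < z}),
      ∃ c' : {x : ℝ // Fusible x ∧ x < z}, c.1 < c'.1 ∧ z - 1 / (n + 2) < c'.1 := by
    intro n c
    have hpos : (0:ℝ) < 1 / (n + 2) := by positivity
    have hw : max c.1 (z - 1 / (n + 2)) < z := max_lt c.2.2 (by linarith)
    obtain ⟨x, hx1, hx2, hx3⟩ := happ _ hw
    exact ⟨⟨x, hx1, hx3⟩, lt_of_le_of_lt (le_max_left _ _) hx2,
      lt_of_le_of_lt (le_max_right _ _) hx2⟩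
  choose step hstep1 hstep2 using hstep
  obtain ⟨x0, hx01, hx02, hx03⟩ := happ (z - 1) (by linarith)
  let v : ℕ → {x : ℝ // Fusible x ∧ x < z} :=
    fun n => Nat.rec ⟨x0, hx01, hx03⟩ (fun n c => step n c) n
  have hv_succ : ∀ n, v (n + 1) = step n (v n) := fun n => rfl
  refine ⟨fun n => (v n).1, fun n => (v n).2.1,
    strictMono_nat_of_lt_succ fun n => by rw [hv_succ]; exact hstep1 n (v n),
    fun n => (v n).2.2, ?_⟩
  have hlow : ∀ n : ℕ, z - 1 / (n + 1) ≤ (v n).1 := by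
    intro n
    cases n with
    | zero =>
      show z - 1 / (((0:ℕ):ℝ) + 1) ≤ x0
      simpa using hx02.le
    | succ m =>
      rw [hv_succ]
      have := hstep2 m (v m)
      have hcast : ((m:ℝ) + 1 + 1) = ((m:ℝ) + 2) := by ring
      push_cast
      rw [hcast]
      exact this.le
  have hup : ∀ n : ℕ, (v n).1 ≤ z := fun n => (v n).2.2.le
  have hlim : Tendsto (fun n : ℕ => z - 1 / (n + 1)) atTop (𝓝 z) := by
    have h1 : Tendsto (fun n : ℕ => 1 / ((n:ℝ) + 1)) atTop (𝓝 0) :=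
      tendsto_one_div_add_atTop_nhds_zero_nat
    have hcz : Tendsto (fun _ : ℕ => z) atTop (𝓝 z) := tendsto_const_nhds
    have h2 := hcz.sub h1
    simpa using h2
  exact tendsto_of_tendsto_of_tendsto_of_le_of_le hlim tendsto_const_nhds hlow hup

theorem fusible_of_mem_closure : ∀ z ∈ closure {x : ℝ | Fusible x}, Fusible z := by
  classical
  by_contra hcon
  push_neg at hcon
  set S := closure {x : ℝ | Fusible x} with hS
  set T : Set ℝ := {w | w ∈ S ∧ ¬ Fusible w} with hT
  have hTsub : T ⊆ S := fun w hw => hw.1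
  have hTwf : T.IsWF := closure_isWF.mono hTsub
  obtain ⟨z0, hz0⟩ := hcon
  have hTne : T.Nonempty := ⟨z0, hz0.1, hz0.2⟩
  set z := hTwf.min hTne with hzdef
  have hzT : z ∈ T := hTwf.min_mem hTne
  have hmin : ∀ w ∈ T, ¬ w < z := fun w hw => hTwf.not_lt_min hTne hw
  obtain ⟨u, hufus, humono, hulz, hulim⟩ := exists_inc_seq hzT.1 hzT.2
  -- shift to ensure positivity
  set w : ℕ → ℝ := fun n => u (n + 1) with hwdef
  have hwfus : ∀ n, Fusible (w n) := fun n => hufus (n + 1)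
  have hwpos : ∀ n, w n ≠ 0 := by
    intro n
    have h1 : u 0 < u (n + 1) := humono (Nat.succ_pos n)
    have h2 : 0 ≤ u 0 := fusible_nonneg (hufus 0)
    exact ne_of_gt (by linarith)
  have hwlim : Tendsto w atTop (𝓝 z) := hulim.comp (tendsto_add_atTop_nat 1)
  have hwlz : ∀ n, w n < z := fun n => hulz (n + 1)
  -- decompose
  have hdec := fun n => exists_decomp (hwfus n) (hwpos n)
  choose a b ha hb hab hablt heq _ _ using hdec
  have hbmem : ∀ n, b n ∈ Set.Icc (0:ℝ) z := fun n =>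
    ⟨fusible_nonneg (hb n), ((by linarith [heq n, hablt n] : b n < w n).trans (hwlz n)).le⟩
  obtain ⟨ys, _, φ1, hφ1, hby⟩ :=
    tendsto_subseq_of_bounded (Metric.isBounded_Icc 0 z) hbmem
  have hamem : ∀ n, (a ∘ φ1) n ∈ Set.Icc (0:ℝ) z := fun n =>
    ⟨fusible_nonneg (ha _), le_trans (by linarith [hab (φ1 n)] : a (φ1 n) ≤ b (φ1 n))
      (hbmem (φ1 n)).2⟩
  obtain ⟨xs, _, φ2, hφ2, hax⟩ :=
    tendsto_subseq_of_bounded (Metric.isBounded_Icc 0 z) hamem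
  set χ : ℕ → ℕ := φ1 ∘ φ2 with hχdef
  have hχmono : StrictMono χ := hφ1.comp hφ2
  have haχ : Tendsto (fun n => a (χ n)) atTop (𝓝 xs) := hax
  have hbχ : Tendsto (fun n => b (χ n)) atTop (𝓝 ys) := hby.comp hφ2.tendsto_atTop
  have hwχ : Tendsto (fun n => w (χ n)) atTop (𝓝 z) := hwlim.comp hχmono.tendsto_atTop
  have hwχ' : Tendsto (fun n => w (χ n)) atTop (𝓝 ((xs + ys + 1) / 2)) := by
    have h1 : Tendsto (fun n => (a (χ n) + b (χ n) + 1) / 2) atTop (𝓝 ((xs + ys + 1) / 2)) :=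
      ((haχ.add hbχ).add tendsto_const_nhds).div_const 2
    refine h1.congr fun n => ?_
    rw [← heq (χ n)]
  have hzeq : z = (xs + ys + 1) / 2 := tendsto_nhds_unique hwχ hwχ'
  have hxy : xs ≤ ys := le_of_tendsto_of_tendsto' haχ hbχ fun n => hab (χ n)
  have hysz : ys ≤ z := le_of_tendsto_of_tendsto' hbχ tendsto_const_nhds
    fun n => ((by linarith [heq (χ n), hablt (χ n)] : b (χ n) < w (χ n)).trans (hwlz (χ n))).le
  have hxsz : xs < z := by linarith
  have hxsS : xs ∈ S := mem_closure_of_tendsto haχ (Eventually.of_forall fun n => ha (χ n))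
  have hysS : ys ∈ S := mem_closure_of_tendsto hbχ (Eventually.of_forall fun n => hb (χ n))
  have hxsF : Fusible xs := by
    by_contra hne
    exact hmin xs ⟨hxsS, hne⟩ hxsz
  rcases lt_or_eq_of_le hysz with hlt | heqz
  · have hysF : Fusible ys := by
      by_contra hne
      exact hmin ys ⟨hysS, hne⟩ hlt
    have habs : |ys - xs| < 1 := by
      rw [abs_lt]
      constructor <;> linarith
    have := Fusible.fuse xs ys hxsF hysF habs
    rw [← hzeq] at this
    exact hzT.2 this
  · -- ys = z, xs = z - 1
    have hxs1 : xs = z - 1 := by linarith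
    have h1 : Fusible ((xs + xs + 1) / 2) := Fusible.fuse xs xs hxsF hxsF (by simp)
    have h2 : (xs + xs + 1) / 2 = z - 1 / 2 := by rw [hxs1]; ring
    rw [h2] at h1
    have h3 : Fusible ((z - 1/2 + (z - 1/2) + 1) / 2) := Fusible.fuse _ _ h1 h1 (by simp)
    have h4 : (z - 1/2 + (z - 1/2) + 1) / 2 = z := by ring
    rw [h4] at h3
    exact hzT.2 h3

theorem fusible_closed (u : ℕ → ℝ) (z : ℝ) (hmono : StrictMono u)
    (hfus : ∀ n, Fusible (u n))
    (hlim : Filter.Tendsto u Filter.atTop (nhds z)) :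
    Fusible z :=
  fusible_of_mem_closure z
    (mem_closure_of_tendsto hlim (Filter.Eventually.of_forall fun n => hfus n))
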